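/- For every p > 0 there exists C_p < ∞ such that for all r > 0 and ψ ∈ (π/2, π): ∫₀^∞ (e^{r s cos ψ}/(r sin ψ))^p |sin(r s sin ψ)|^p ds ≤ C_p/(r^{p+1}|cos ψ|). -/

import Mathlib

open MeasureTheory
open scoped Real

private lemma aux_int_exp {b : ℝ} (hb : 0 < b) :
    ∫ s in Set.Ioi (0 : ℝ), Real.exp (-b * s) = 1 / b := by
  have h := integral_comp_mul_left_Ioi (fun x => Real.exp (-x)) 0 hb
  simp only [mul_zero, smul_eq_mul] at h
  have h2 : (∫ x in Set.Ioi (0:ℝ), Real.exp (-x)) = 1 := integral_exp_neg_Ioi_zero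
  have : (fun x : ℝ => Real.exp (-(b * x))) = fun x : ℝ => Real.exp (-b * x) := by
    funext x; ring_nf
  rw [this] at h
  rw [h, h2, mul_one, one_div]

private lemma aux_u_le (u : ℝ) (hu : 0 ≤ u) : u ≤ 2 * Real.exp (u / 4) := by
  have h1 : u / 8 + 1 ≤ Real.exp (u / 8) := Real.add_one_le_exp (u / 8)
  have h2 : Real.exp (u / 4) = Real.exp (u / 8) * Real.exp (u / 8) := by
    rw [← Real.exp_add]; ring_nf
  nlinarith [Real.exp_pos (u / 8), sq_nonneg (u - 8)]

private lemma aux_ptwise {r s ψ : ℝ} (hr : 0 < r) (hs : 0 ≤ s)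
    (h1 : π / 2 < ψ) (h2 : ψ < π) :
    Real.exp (r * s * Real.cos ψ) / (r * Real.sin ψ) * |Real.sin (r * s * Real.sin ψ)|
      ≤ 2 / r * Real.exp (r * s * Real.cos ψ / 2) := by
  have hsin : 0 < Real.sin ψ := Real.sin_pos_of_pos_of_lt_pi
    (lt_trans (by positivity) h1) h2
  have hcos : Real.cos ψ < 0 := Real.cos_neg_of_pi_div_two_lt_of_lt h1
    (by nlinarith [Real.pi_pos])
  have hE : (0:ℝ) < Real.exp (r * s * Real.cos ψ) := Real.exp_pos _
  have hE2 : (0:ℝ) < Real.exp (r * s * Real.cos ψ / 2) := Real.exp_pos _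
  have hEle : Real.exp (r * s * Real.cos ψ) ≤ Real.exp (r * s * Real.cos ψ / 2) := by
    apply Real.exp_le_exp.2
    nlinarith [mul_nonneg (mul_nonneg hr.le hs) (neg_nonneg.2 hcos.le)]
  rcases le_or_gt (1/2 : ℝ) (Real.sin ψ) with hhalf | hhalf
  · have habs : |Real.sin (r * s * Real.sin ψ)| ≤ 1 := Real.abs_sin_le_one _
    have hpos : (0:ℝ) < r * Real.sin ψ := by positivity
    rw [div_mul_eq_mul_div, div_le_iff₀ hpos]
    have h0 : (0:ℝ) ≤ |Real.sin (r * s * Real.sin ψ)| := abs_nonneg _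
    have heq : 2 / r * Real.exp (r * s * Real.cos ψ / 2) * (r * Real.sin ψ)
        = 2 * Real.exp (r * s * Real.cos ψ / 2) * Real.sin ψ := by
      field_simp
    rw [heq]
    nlinarith
  · -- small sin case: cos ψ ≤ -1/2
    have hc : Real.cos ψ ≤ -(1/2) := by
      by_contra hcon
      push_neg at hcon
      have hsq : Real.sin ψ ^ 2 + Real.cos ψ ^ 2 = 1 := Real.sin_sq_add_cos_sq ψ
      nlinarith
    have habs : |Real.sin (r * s * Real.sin ψ)| ≤ r * s * Real.sin ψ := by
      have := Real.abs_sin_le_abs (x := r * s * Real.sin ψ)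
      rwa [abs_of_nonneg (show (0:ℝ) ≤ r * s * Real.sin ψ by positivity)] at this
    have hstep : Real.exp (r * s * Real.cos ψ) / (r * Real.sin ψ) *
        |Real.sin (r * s * Real.sin ψ)| ≤ Real.exp (r * s * Real.cos ψ) * s := by
      rw [div_mul_eq_mul_div, div_le_iff₀ (by positivity)]
      calc Real.exp (r * s * Real.cos ψ) * |Real.sin (r * s * Real.sin ψ)|
          ≤ Real.exp (r * s * Real.cos ψ) * (r * s * Real.sin ψ) := by
            exact mul_le_mul_of_nonneg_left habs hE.le
        _ = Real.exp (r * s * Real.cos ψ) * s * (r * Real.sin ψ) := by ring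
    refine hstep.trans ?_
    -- need : exp(rsc) * s ≤ 2/r * exp(rsc/2)
    have hkey : r * s ≤ 2 * Real.exp (r * s / 4) := aux_u_le (r * s) (by positivity)
    have hEsplit : Real.exp (r * s * Real.cos ψ / 2) =
        Real.exp (r * s * Real.cos ψ) * Real.exp (-(r * s * Real.cos ψ) / 2) := by
      rw [← Real.exp_add]; ring_nf
    have hE3 : Real.exp (r * s / 4) ≤ Real.exp (-(r * s * Real.cos ψ) / 2) := by
      apply Real.exp_le_exp.2
      nlinarith [mul_nonneg hr.le hs]
    have hE4 : r * s ≤ 2 * Real.exp (-(r * s * Real.cos ψ) / 2) := by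
      refine hkey.trans ?_
      nlinarith
    rw [hEsplit]
    have : Real.exp (r * s * Real.cos ψ) * s * r ≤
        2 * (Real.exp (r * s * Real.cos ψ) * Real.exp (-(r * s * Real.cos ψ) / 2)) := by
      nlinarith [mul_le_mul_of_nonneg_left hE4 hE.le]
    rw [div_mul_eq_mul_div, le_div_iff₀ hr]
    linarith

theorem stmt13 (p : ℝ) (hp : 0 < p) :
    ∃ C : ℝ, ∀ r ψ : ℝ, 0 < r → ψ ∈ Set.Ioo (π / 2) π →
      ∫ s in Set.Ioi (0 : ℝ),
          (Real.exp (r * s * Real.cos ψ) / (r * Real.sin ψ)) ^ p *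
            |Real.sin (r * s * Real.sin ψ)| ^ p
        ≤ C / (r ^ (p + 1) * |Real.cos ψ|) := by
  refine ⟨2 ^ (p + 1) / p, fun r ψ hr hψ => ?_⟩
  obtain ⟨h1, h2⟩ := hψ
  have hsin : 0 < Real.sin ψ := Real.sin_pos_of_pos_of_lt_pi
    (lt_trans (by positivity) h1) h2
  have hcos : Real.cos ψ < 0 := Real.cos_neg_of_pi_div_two_lt_of_lt h1
    (by nlinarith [Real.pi_pos])
  set b : ℝ := p * r * (-Real.cos ψ) / 2 with hbdef
  have hb : 0 < b := by
    have : 0 < -Real.cos ψ := by linarith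
    positivity
  have hg_int : IntegrableOn (fun s : ℝ => (2 / r) ^ p * Real.exp (-b * s))
      (Set.Ioi (0:ℝ)) := (exp_neg_integrableOn_Ioi 0 hb).const_mul _
  have hmono : ∫ s in Set.Ioi (0 : ℝ),
      (Real.exp (r * s * Real.cos ψ) / (r * Real.sin ψ)) ^ p *
        |Real.sin (r * s * Real.sin ψ)| ^ p
      ≤ ∫ s in Set.Ioi (0:ℝ), (2 / r) ^ p * Real.exp (-b * s) := by
    apply integral_mono_of_nonneg
    · filter_upwards with s
      positivity
    · exact hg_int
    · filter_upwards [ae_restrict_mem measurableSet_Ioi] with s hs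
      have hs0 : (0:ℝ) ≤ s := (le_of_lt hs)
      have hbase := aux_ptwise hr hs0 h1 h2
      have hA : (0:ℝ) ≤ Real.exp (r * s * Real.cos ψ) / (r * Real.sin ψ) := by positivity
      have hB : (0:ℝ) ≤ |Real.sin (r * s * Real.sin ψ)| := abs_nonneg _
      calc (Real.exp (r * s * Real.cos ψ) / (r * Real.sin ψ)) ^ p *
            |Real.sin (r * s * Real.sin ψ)| ^ p
          = (Real.exp (r * s * Real.cos ψ) / (r * Real.sin ψ) *
              |Real.sin (r * s * Real.sin ψ)|) ^ p := (Real.mul_rpow hA hB).symm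
        _ ≤ (2 / r * Real.exp (r * s * Real.cos ψ / 2)) ^ p :=
            Real.rpow_le_rpow (by positivity) hbase hp.le
        _ = (2 / r) ^ p * Real.exp (r * s * Real.cos ψ / 2) ^ p :=
            Real.mul_rpow (by positivity) (Real.exp_pos _).le
        _ = (2 / r) ^ p * Real.exp (-b * s) := by
            rw [← Real.exp_mul]
            congr 1
            rw [hbdef]; ring
  have hval : ∫ s in Set.Ioi (0:ℝ), (2 / r) ^ p * Real.exp (-b * s)
      = (2 / r) ^ p * (1 / b) := by
    rw [MeasureTheory.integral_const_mul, aux_int_exp hb]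
  refine hmono.trans ?_
  rw [hval]
  have habs : |Real.cos ψ| = -Real.cos ψ := abs_of_neg hcos
  have hdiv : (2 / r) ^ p = 2 ^ p / r ^ p := Real.div_rpow (by norm_num : (0:ℝ) ≤ 2) hr.le p
  have hrp1 : r ^ (p + 1) = r ^ p * r := by
    rw [Real.rpow_add hr, Real.rpow_one]
  have h2p1 : (2:ℝ) ^ (p + 1) = 2 ^ p * 2 := by
    rw [Real.rpow_add (by norm_num : (0:ℝ) < 2), Real.rpow_one]
  rw [habs, hdiv, hrp1, h2p1, hbdef]
  have hrp : (0:ℝ) < r ^ p := Real.rpow_pos_of_pos hr p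
  have h2pp : (0:ℝ) < (2:ℝ) ^ p := Real.rpow_pos_of_pos (by norm_num) p
  have hnc : (0:ℝ) < -Real.cos ψ := by linarith
  apply le_of_eq
  field_simp
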